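/- Let Γ be a fully symmetric access structure, i.e., every isomorphism between two induced substructures of Γ extends to an automorphism of Γ. Then the on-line complexity equals the off-line complexity: o(Γ) = σ(Γ). -/

import Mathlib

open MeasureTheory Finset
open scoped ENNReal

namespace OnlineSecretSharing

noncomputable section

/-- Shannon entropy of a finitely-valued random variable `X` on the probability
space `(Ω, μ)`. -/
def H {Ω : Type*} [MeasurableSpace Ω] (μ : Measure Ω) {S : Type*} [Fintype S]
    (X : Ω → S) : ℝ :=
  ∑ s : S, Real.negMulLog (μ (X ⁻¹' {s})).toReal

/-- `Y` is almost surely a function of `X`. -/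
def DeterminedBy {Ω : Type*} [MeasurableSpace Ω] (μ : Measure Ω) {S T : Type*}
    (Y : Ω → T) (X : Ω → S) : Prop :=
  ∃ f : S → T, ∀ᵐ ω ∂μ, Y ω = f (X ω)

/-- The (finitely-valued) random variables `X` and `Y` are statistically
independent. -/
def IndepRV {Ω : Type*} [MeasurableSpace Ω] (μ : Measure Ω) {S T : Type*}
    (X : Ω → S) (Y : Ω → T) : Prop :=
  ∀ (s : S) (t : T), μ (X ⁻¹' {s} ∩ Y ⁻¹' {t}) = μ (X ⁻¹' {s}) * μ (Y ⁻¹' {t})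

/-- The joint random variable `(ξ_p)_{p ∈ A}`. -/
def joint {Ω P : Type*} {S : P → Type*} (ξ : (p : P) → Ω → S p) (A : Finset P) :
    Ω → ((p : A) → S (p : P)) :=
  fun ω p => ξ (p : P) ω

/-- An access structure: a nonempty Sperner family of nonempty subsets of the set
`P` of participants; the members of `edges` are the minimal qualified subsets. -/
structure AccessStructure (P : Type*) where
  (edges : Finset (Finset P))
  (nonempty : edges.Nonempty)
  (mem_nonempty : ∀ E ∈ edges, E.Nonempty)
  (sperner : ∀ E ∈ edges, ∀ F ∈ edges, E ⊆ F → E = F)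

/-- A set of participants is qualified if it contains a minimal qualified set. -/
def AccessStructure.Qualified {P : Type*} (Γ : AccessStructure P) (A : Finset P) : Prop :=
  ∃ E ∈ Γ.edges, E ⊆ A

/-- The degree of a participant: the number of hyperedges containing it. -/
def AccessStructure.degree {P : Type*} [DecidableEq P] (Γ : AccessStructure P)
    (p : P) : ℕ :=
  (Γ.edges.filter fun E => p ∈ E).card

/-- The maximal degree of an access structure. -/
def AccessStructure.maxDegree {P : Type*} [Fintype P] [DecidableEq P]
    (Γ : AccessStructure P) : ℕ :=
  Finset.univ.sup Γ.degree

/-- A (candidate) secret sharing scheme: finite-range random variables on a common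
probability space, one secret and one share for each participant. -/
structure Scheme (P : Type) where
  (Ω : Type)
  [ms : MeasurableSpace Ω]
  (μ : Measure Ω)
  (isProb : IsProbabilityMeasure μ)
  (Sec : Type)
  [secFin : Fintype Sec]
  (sec : Ω → Sec)
  (Sh : P → Type)
  [shFin : ∀ p, Fintype (Sh p)]
  (sh : (p : P) → Ω → Sh p)

attribute [instance] Scheme.ms Scheme.secFin Scheme.shFin

/-- A perfect secret sharing scheme realizing `Γ`: the secret has positive entropy,
qualified sets determine the secret, and the shares of unqualified sets are
independent of the secret. -/
def Scheme.Realizes {P : Type} [Fintype P] [DecidableEq P] (𝒮 : Scheme P)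
    (Γ : AccessStructure P) : Prop :=
  0 < H 𝒮.μ 𝒮.sec ∧
  (∀ A : Finset P, Γ.Qualified A → DeterminedBy 𝒮.μ 𝒮.sec (joint 𝒮.sh A)) ∧
  (∀ A : Finset P, ¬ Γ.Qualified A → IndepRV 𝒮.μ (joint 𝒮.sh A) 𝒮.sec)

/-- Complexity of a scheme: (size of the largest share) / (size of the secret). -/
def Scheme.complexity {P : Type} [Fintype P] (𝒮 : Scheme P) : ℝ≥0∞ :=
  (⨆ p : P, ENNReal.ofReal (H 𝒮.μ (𝒮.sh p))) / ENNReal.ofReal (H 𝒮.μ 𝒮.sec)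

/-- The (off-line) complexity `σ(Γ)` of an access structure. -/
def sigmaC {P : Type} [Fintype P] [DecidableEq P] (Γ : AccessStructure P) : ℝ≥0∞ :=
  ⨅ (𝒮 : Scheme P) (_ : 𝒮.Realizes Γ), 𝒮.complexity

/-- An on-line secret sharing scheme: a secret, a family `(ξ_α)_{α ∈ Idx}` of
finite-range random variables, and a dealer strategy `D` assigning an index to
every finite history; a history is a list whose `j`-th entry is the set of
(position-encoded) minimal qualified sets revealed when the `j`-th participant
arrives. -/
structure OnlineScheme (P : Type) where
  (Ω : Type)
  [ms : MeasurableSpace Ω]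
  (μ : Measure Ω)
  (isProb : IsProbabilityMeasure μ)
  (Sec : Type)
  [secFin : Fintype Sec]
  (sec : Ω → Sec)
  (Idx : Type)
  (ShT : Idx → Type)
  [shFin : ∀ α, Fintype (ShT α)]
  (ξ : (α : Idx) → Ω → ShT α)
  (D : List (Finset (Finset ℕ)) → Idx)

attribute [instance] OnlineScheme.ms OnlineScheme.secFin OnlineScheme.shFin

/-- The set of hyperedges (encoded via positions in the arrival order `π`) revealed
when the `j`-th participant arrives: those minimal qualified sets containing the
`j`-th participant all whose members arrived by time `j`. -/
def hist {P : Type} [Fintype P] [DecidableEq P] (Γ : AccessStructure P) {n : ℕ}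
    (π : Fin n ≃ P) (j : Fin n) : Finset (Finset ℕ) :=
  (Γ.edges.filter fun E => π j ∈ E ∧ ∀ p ∈ E, ∃ i : Fin n, i ≤ j ∧ π i = p).image
    fun E => E.image fun p => ((π.symm p : Fin n) : ℕ)

/-- The history seen by the dealer when the `j`-th participant arrives. -/
def histList {P : Type} [Fintype P] [DecidableEq P] (Γ : AccessStructure P) {n : ℕ}
    (π : Fin n ≃ P) (j : Fin n) : List (Finset (Finset ℕ)) :=
  ((List.finRange n).take (j.1 + 1)).map (hist Γ π)

/-- The assignment of shares produced by an on-line scheme for the arrival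
order `π`, as an (off-line) scheme. -/
def OnlineScheme.toScheme {P : Type} [Fintype P] [DecidableEq P] (𝒪 : OnlineScheme P)
    (Γ : AccessStructure P) (π : Fin (Fintype.card P) ≃ P) : Scheme P where
  Ω := 𝒪.Ω
  ms := 𝒪.ms
  μ := 𝒪.μ
  isProb := 𝒪.isProb
  Sec := 𝒪.Sec
  secFin := 𝒪.secFin
  sec := 𝒪.sec
  Sh := fun p => 𝒪.ShT (𝒪.D (histList Γ π (π.symm p)))
  shFin := fun _ => 𝒪.shFin _
  sh := fun _ => 𝒪.ξ _

/-- An on-line scheme realizes `Γ` if for every arrival order the induced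
assignment of shares is a perfect secret sharing scheme realizing `Γ`. -/
def OnlineScheme.Realizes {P : Type} [Fintype P] [DecidableEq P] (𝒪 : OnlineScheme P)
    (Γ : AccessStructure P) : Prop :=
  ∀ π : Fin (Fintype.card P) ≃ P, (𝒪.toScheme Γ π).Realizes Γ

/-- Complexity of an on-line scheme. -/
def OnlineScheme.complexity {P : Type} (𝒪 : OnlineScheme P) : ℝ≥0∞ :=
  (⨆ α : 𝒪.Idx, ENNReal.ofReal (H 𝒪.μ (𝒪.ξ α))) / ENNReal.ofReal (H 𝒪.μ 𝒪.sec)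

/-- The on-line complexity `o(Γ)` of an access structure. -/
def oC {P : Type} [Fintype P] [DecidableEq P] (Γ : AccessStructure P) : ℝ≥0∞ :=
  ⨅ (𝒪 : OnlineScheme P) (_ : 𝒪.Realizes Γ), 𝒪.complexity

/-- An entropy function for `Γ`: rules (a)–(e) of the entropy method. -/
def IsEntropyFn {P : Type} [DecidableEq P] (Γ : AccessStructure P)
    (f : Finset P → ℝ) : Prop :=
  f ∅ = 0 ∧
  (∀ A B : Finset P, A ⊆ B → f A ≤ f B) ∧
  (∀ A B : Finset P, f (A ∩ B) + f (A ∪ B) ≤ f A + f B) ∧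
  (∀ A B : Finset P, A ⊆ B → ¬ Γ.Qualified A → Γ.Qualified B → f A + 1 ≤ f B) ∧
  (∀ A B : Finset P, Γ.Qualified A → Γ.Qualified B → ¬ Γ.Qualified (A ∩ B) →
    f (A ∩ B) + f (A ∪ B) + 1 ≤ f A + f B)

/-- The access structure associated with a graph: the minimal qualified sets are
exactly the edges. -/
def graphAS {P : Type} [Fintype P] [DecidableEq P] (G : SimpleGraph P)
    (hne : ∃ a b, G.Adj a b) : AccessStructure P :=
  letI : DecidableRel G.Adj := Classical.decRel _
  { edges := ((Finset.univ : Finset (P × P)).filter fun q => G.Adj q.1 q.2).image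
      fun q => {q.1, q.2}
    nonempty := by
      obtain ⟨a, b, hab⟩ := hne
      exact ⟨{a, b}, Finset.mem_image.2
        ⟨(a, b), Finset.mem_filter.2 ⟨Finset.mem_univ _, hab⟩, rfl⟩⟩
    mem_nonempty := by
      intro E hE
      rcases Finset.mem_image.1 hE with ⟨q, _, rfl⟩
      exact ⟨q.1, by simp⟩
    sperner := by
      intro E hE F hF hEF
      rcases Finset.mem_image.1 hE with ⟨q, hq, rfl⟩
      rcases Finset.mem_image.1 hF with ⟨r, hr, rfl⟩
      have hq' : G.Adj q.1 q.2 := (Finset.mem_filter.1 hq).2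
      have hr' : G.Adj r.1 r.2 := (Finset.mem_filter.1 hr).2
      refine Finset.eq_of_subset_of_card_le hEF ?_
      rw [Finset.card_pair hr'.ne, Finset.card_pair hq'.ne] }

/-- The path `P_{m+2}` on the `m + 2` vertices `0, 1, …, m+1` (in this order),
as an access structure: the minimal qualified sets are the pairs `{i, i+1}`. -/
def pathAS (m : ℕ) : AccessStructure (Fin (m + 2)) where
  edges := (Finset.univ : Finset (Fin (m + 1))).image fun i => {i.castSucc, i.succ}
  nonempty := ⟨_, Finset.mem_image.2 ⟨0, Finset.mem_univ _, rfl⟩⟩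
  mem_nonempty := by
    intro E hE
    rcases Finset.mem_image.1 hE with ⟨i, _, rfl⟩
    exact ⟨_, Finset.mem_insert_self _ _⟩
  sperner := by
    intro E hE F hF hEF
    rcases Finset.mem_image.1 hE with ⟨i, _, rfl⟩
    rcases Finset.mem_image.1 hF with ⟨j, _, rfl⟩
    have h1 := hEF (Finset.mem_insert_self _ _)
    have h2 := hEF (Finset.mem_insert_of_mem (Finset.mem_singleton_self _))
    rw [Finset.mem_insert, Finset.mem_singleton] at h1 h2
    rw [Fin.ext_iff, Fin.ext_iff] at h1 h2
    simp only [Fin.coe_castSucc, Fin.val_succ] at h1 h2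
    have : i = j := Fin.ext (by omega)
    subst this; rfl

/-- The cycle `C_{m+3}` on the `m + 3` vertices `0, 1, …, m+2` (in this cyclic
order), as an access structure: the minimal qualified sets are the pairs
`{i, i+1}` together with `{0, m+2}`. -/
def cycleAS (m : ℕ) : AccessStructure (Fin (m + 3)) where
  edges := ((Finset.univ : Finset (Fin (m + 2))).image fun i => {i.castSucc, i.succ}) ∪
    {({0, Fin.last (m + 2)} : Finset (Fin (m + 3)))}
  nonempty := ⟨_, Finset.mem_union_right _ (Finset.mem_singleton_self _)⟩
  mem_nonempty := by
    intro E hE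
    rcases Finset.mem_union.1 hE with hE | hE
    · rcases Finset.mem_image.1 hE with ⟨i, _, rfl⟩
      exact ⟨_, Finset.mem_insert_self _ _⟩
    · rw [Finset.mem_singleton.1 hE]
      exact ⟨_, Finset.mem_insert_self _ _⟩
  sperner := by
    intro E hE F hF hEF
    rcases Finset.mem_union.1 hE with hE | hE <;>
      rcases Finset.mem_union.1 hF with hF | hF
    · rcases Finset.mem_image.1 hE with ⟨i, _, rfl⟩
      rcases Finset.mem_image.1 hF with ⟨j, _, rfl⟩
      have h1 := hEF (Finset.mem_insert_self _ _)
      have h2 := hEF (Finset.mem_insert_of_mem (Finset.mem_singleton_self _))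
      rw [Finset.mem_insert, Finset.mem_singleton] at h1 h2
      rw [Fin.ext_iff, Fin.ext_iff] at h1 h2
      simp only [Fin.coe_castSucc, Fin.val_succ] at h1 h2
      have : i = j := Fin.ext (by omega)
      subst this; rfl
    · exfalso
      rcases Finset.mem_image.1 hE with ⟨i, _, rfl⟩
      rw [Finset.mem_singleton.1 hF] at hEF
      have h1 := hEF (Finset.mem_insert_self _ _)
      have h2 := hEF (Finset.mem_insert_of_mem (Finset.mem_singleton_self _))
      rw [Finset.mem_insert, Finset.mem_singleton] at h1 h2
      rw [Fin.ext_iff, Fin.ext_iff] at h1 h2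
      simp only [Fin.coe_castSucc, Fin.val_succ, Fin.val_zero, Fin.val_last] at h1 h2
      have := i.2
      omega
    · exfalso
      rcases Finset.mem_image.1 hF with ⟨j, _, rfl⟩
      rw [Finset.mem_singleton.1 hE] at hEF
      have h1 := hEF (Finset.mem_insert_self _ _)
      have h2 := hEF (Finset.mem_insert_of_mem (Finset.mem_singleton_self _))
      rw [Finset.mem_insert, Finset.mem_singleton] at h1 h2
      rw [Fin.ext_iff, Fin.ext_iff] at h1 h2
      simp only [Fin.coe_castSucc, Fin.val_succ, Fin.val_zero, Fin.val_last] at h1 h2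
      have := j.2
      omega
    · rw [Finset.mem_singleton.1 hE, Finset.mem_singleton.1 hF]

/-- The vertex set of the graph `G(d,m)`: a center (`none`), `d` star leaves
(`some (inl i)`) and `m` isolated vertices (`some (inr j)`). -/
abbrev StarVertex (d m : ℕ) : Type := Option (Fin d ⊕ Fin m)

/-- The center of the star in the graph `G(d,m)`. -/
def starCenter (d m : ℕ) : StarVertex d m := none

/-- The graph `G(d,m)`: a star with `d` edges together with `m` isolated
vertices, as an access structure. -/
def starAS (d m : ℕ) (hd : 1 ≤ d) : AccessStructure (StarVertex d m) where
  edges := (Finset.univ : Finset (Fin d)).image fun i =>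
    {starCenter d m, some (Sum.inl i)}
  nonempty := ⟨_, Finset.mem_image.2 ⟨⟨0, by omega⟩, Finset.mem_univ _, rfl⟩⟩
  mem_nonempty := by
    intro E hE
    rcases Finset.mem_image.1 hE with ⟨i, _, rfl⟩
    exact ⟨_, Finset.mem_insert_self _ _⟩
  sperner := by
    intro E hE F hF hEF
    rcases Finset.mem_image.1 hE with ⟨i, _, rfl⟩
    rcases Finset.mem_image.1 hF with ⟨j, _, rfl⟩
    have h2 := hEF (Finset.mem_insert_of_mem (Finset.mem_singleton_self _))
    rw [Finset.mem_insert, Finset.mem_singleton] at h2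
    rcases h2 with h | h
    · exact absurd h (by simp [starCenter])
    · simp only [Option.some.injEq, Sum.inl.injEq] at h
      subst h; rfl

/-- The substructure of `Γ` induced by `S` (assuming it contains at least one
hyperedge), as an access structure on the subtype `S`. -/
def inducedAS {P : Type} [DecidableEq P] (Γ : AccessStructure P) (S : Finset P)
    (h : ∃ E ∈ Γ.edges, E ⊆ S) : AccessStructure {x : P // x ∈ S} where
  edges := (Γ.edges.filter fun E => E ⊆ S).image fun E => E.subtype fun x => x ∈ S
  nonempty := by
    obtain ⟨E, hE, hES⟩ := h
    exact ⟨_, Finset.mem_image.2 ⟨E, Finset.mem_filter.2 ⟨hE, hES⟩, rfl⟩⟩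
  mem_nonempty := by
    intro E' hE'
    rcases Finset.mem_image.1 hE' with ⟨E, hE, rfl⟩
    have hE1 := (Finset.mem_filter.1 hE).1
    have hES := (Finset.mem_filter.1 hE).2
    obtain ⟨a, ha⟩ := Γ.mem_nonempty E hE1
    exact ⟨⟨a, hES ha⟩, Finset.mem_subtype.2 ha⟩
  sperner := by
    intro E' hE' F' hF' hEF
    rcases Finset.mem_image.1 hE' with ⟨E, hE, rfl⟩
    rcases Finset.mem_image.1 hF' with ⟨F, hF, rfl⟩
    have hE1 := (Finset.mem_filter.1 hE).1
    have hF1 := (Finset.mem_filter.1 hF).1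
    have hES := (Finset.mem_filter.1 hE).2
    have hsub : E ⊆ F := by
      intro a ha
      exact Finset.mem_subtype.1 (hEF (Finset.mem_subtype.2 ha : (⟨a, hES ha⟩ :
        {x : P // x ∈ S}) ∈ E.subtype fun x => x ∈ S))
    rw [Γ.sperner E hE1 F hF1 hsub]

/-- `Γ` is fully symmetric: every isomorphism between two of its induced
substructures extends to an automorphism of `Γ`. -/
def FullySymmetric {P : Type} [Fintype P] [DecidableEq P]
    (Γ : AccessStructure P) : Prop :=
  ∀ (S₁ S₂ : Finset P) (φ : P → P), Set.BijOn φ ↑S₁ ↑S₂ →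
    (∀ E ∈ Γ.edges, E ⊆ S₁ → E.image φ ∈ Γ.edges) →
    (∀ F ∈ Γ.edges, F ⊆ S₂ → ∃ E ∈ Γ.edges, E ⊆ S₁ ∧ E.image φ = F) →
    ∃ μ : Equiv.Perm P, (∀ p ∈ S₁, μ p = φ p) ∧
      ∀ E : Finset P, E ∈ Γ.edges ↔ E.image μ ∈ Γ.edges

section Aux

variable {P : Type} [Fintype P] [DecidableEq P]

lemma histList_take (Γ : AccessStructure P) {n : ℕ} (π : Fin n ≃ P) {i j : Fin n}
    (hij : i ≤ j) : (histList Γ π j).take (i.1 + 1) = histList Γ π i := by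
  unfold histList
  rw [← List.map_take, List.take_take, Nat.min_eq_left (Nat.succ_le_succ hij)]

lemma histList_length (Γ : AccessStructure P) {n : ℕ} (π : Fin n ≃ P) (j : Fin n) :
    (histList Γ π j).length = j.1 + 1 := by
  simp only [histList, List.length_map, List.length_take, List.length_finRange]
  omega

lemma hist_of_histList_eq (Γ : AccessStructure P) {n : ℕ} (π π' : Fin n ≃ P) {j : Fin n}
    (h : histList Γ π j = histList Γ π' j) {i : Fin n} (hij : i ≤ j) :
    hist Γ π i = hist Γ π' i := by
  have h1 : (histList Γ π j).take (i.1 + 1) = (histList Γ π' j).take (i.1 + 1) := by rw [h]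
  rw [histList_take Γ π hij, histList_take Γ π' hij] at h1
  have hget : ∀ (π'' : Fin n ≃ P) (hi : i.1 < (histList Γ π'' i).length),
      (histList Γ π'' i)[i.1] = hist Γ π'' i := by
    intro π'' hi
    simp only [histList, List.getElem_map, List.getElem_take, List.getElem_finRange]
    congr 1
  have hlen : i.1 < (histList Γ π i).length := by rw [histList_length]; omega
  have hlen' : i.1 < (histList Γ π' i).length := by rw [histList_length]; omega
  rw [← hget π hlen, ← hget π' hlen']
  exact List.getElem_of_eq h1 _

end Aux
section Aux2

variable {P : Type} [Fintype P] [DecidableEq P]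

lemma edge_transfer (Γ : AccessStructure P) {n : ℕ} (π π' : Fin n ≃ P) {j : Fin n}
    (hh : ∀ i : Fin n, i ≤ j → hist Γ π i = hist Γ π' i)
    {E : Finset P} (hE : E ∈ Γ.edges) (hES : ∀ p ∈ E, π.symm p ≤ j) :
    E.image (fun p => π' (π.symm p)) ∈ Γ.edges ∧
      ∀ q ∈ E.image (fun p => π' (π.symm p)), π'.symm q ≤ j := by
  have hne : E.Nonempty := Γ.mem_nonempty E hE
  set i₀ : Fin n := E.sup' hne (fun p => π.symm p) with hi₀
  have hi₀j : i₀ ≤ j := Finset.sup'_le hne _ hES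
  obtain ⟨p₀, hp₀E, hp₀⟩ := Finset.exists_mem_eq_sup' hne (fun p => π.symm p)
  have hmem : E ∈ Γ.edges.filter
      (fun F => π i₀ ∈ F ∧ ∀ p ∈ F, ∃ i : Fin n, i ≤ i₀ ∧ π i = p) := by
    refine Finset.mem_filter.2 ⟨hE, ?_, ?_⟩
    · have : π i₀ = p₀ := by rw [hi₀, hp₀]; simp
      rw [this]; exact hp₀E
    · intro p hp
      exact ⟨π.symm p, Finset.le_sup' (fun p => π.symm p) hp, by simp⟩
  have henc : E.image (fun p => ((π.symm p : Fin n) : ℕ)) ∈ hist Γ π' i₀ := by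
    rw [← hh i₀ hi₀j]
    exact Finset.mem_image_of_mem _ hmem
  unfold hist at henc
  rcases Finset.mem_image.1 henc with ⟨F, hFf, hFenc⟩
  obtain ⟨hFe, hFj, hFall⟩ := Finset.mem_filter.1 hFf
  have key : E.image (fun p => π' (π.symm p)) = F := by
    apply Finset.Subset.antisymm
    · intro q hq
      rcases Finset.mem_image.1 hq with ⟨p, hp, rfl⟩
      have hv : ((π.symm p : Fin n) : ℕ) ∈ F.image (fun r => ((π'.symm r : Fin n) : ℕ)) := by
        rw [hFenc]; exact Finset.mem_image_of_mem _ hp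
      rcases Finset.mem_image.1 hv with ⟨q', hq', hval⟩
      have h1 : π'.symm q' = π.symm p := Fin.ext hval
      have h2 : q' = π' (π.symm p) := by rw [← h1]; simp
      rwa [← h2]
    · intro q hq
      have hv : ((π'.symm q : Fin n) : ℕ) ∈ E.image (fun p => ((π.symm p : Fin n) : ℕ)) := by
        rw [← hFenc]; exact Finset.mem_image_of_mem _ hq
      rcases Finset.mem_image.1 hv with ⟨p, hp, hval⟩
      have h1 : π.symm p = π'.symm q := Fin.ext hval
      have h2 : π' (π.symm p) = q := by rw [h1]; simp
      exact Finset.mem_image.2 ⟨p, hp, h2⟩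
  constructor
  · rw [key]; exact hFe
  · intro q hq; rw [key] at hq
    obtain ⟨i, hi, rfl⟩ := hFall q hq
    have : π'.symm (π' i) = i := by simp
    rw [this]
    exact le_trans hi hi₀j

lemma exists_auto {n : ℕ} (Γ : AccessStructure P) (hFS : FullySymmetric Γ)
    (π π' : Fin n ≃ P) (j : Fin n)
    (hh : ∀ i : Fin n, i ≤ j → hist Γ π i = hist Γ π' i) :
    ∃ μ : Equiv.Perm P, (∀ E : Finset P, E ∈ Γ.edges ↔ E.image μ ∈ Γ.edges) ∧
      ∀ i : Fin n, i ≤ j → μ (π i) = π' i := by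
  set S₁ : Finset P := Finset.univ.filter (fun p => π.symm p ≤ j) with hS₁
  set S₂ : Finset P := Finset.univ.filter (fun p => π'.symm p ≤ j) with hS₂
  set φ : P → P := fun p => π' (π.symm p) with hφdef
  have hmem₁ : ∀ p : P, p ∈ S₁ ↔ π.symm p ≤ j := by intro p; simp [hS₁]
  have hmem₂ : ∀ q : P, q ∈ S₂ ↔ π'.symm q ≤ j := by intro q; simp [hS₂]
  have hhsymm : ∀ i : Fin n, i ≤ j → hist Γ π' i = hist Γ π i := fun i hi => (hh i hi).symm
  have hbij : Set.BijOn φ ↑S₁ ↑S₂ := by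
    refine ⟨?_, ?_, ?_⟩
    · intro p hp
      have : π.symm p ≤ j := (hmem₁ p).1 hp
      have : π'.symm (φ p) ≤ j := by simpa [hφdef] using this
      exact (hmem₂ (φ p)).2 this
    · intro a _ b _ hab
      have := π'.injective hab
      exact π.symm.injective this
    · intro q hq
      refine ⟨π (π'.symm q), ?_, ?_⟩
      · have : π'.symm q ≤ j := (hmem₂ q).1 hq
        exact (hmem₁ _).2 (by simpa using this)
      · simp [hφdef]
  have hfwd : ∀ E ∈ Γ.edges, E ⊆ S₁ → E.image φ ∈ Γ.edges := by
    intro E hE hES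
    exact (edge_transfer Γ π π' hh hE (fun p hp => (hmem₁ p).1 (hES hp))).1
  have hbwd : ∀ F ∈ Γ.edges, F ⊆ S₂ → ∃ E ∈ Γ.edges, E ⊆ S₁ ∧ E.image φ = F := by
    intro F hF hFsub
    obtain ⟨hFe, hFs⟩ := edge_transfer Γ π' π hhsymm hF (fun q hq => (hmem₂ q).1 (hFsub hq))
    refine ⟨F.image (fun q => π (π'.symm q)), hFe, ?_, ?_⟩
    · intro p hp
      exact (hmem₁ p).2 (hFs p hp)
    · rw [Finset.image_image]
      have : (φ ∘ fun q => π (π'.symm q)) = id := by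
        funext q; simp [hφdef]
      rw [this, Finset.image_id]
  obtain ⟨μ, hμ1, hμ2⟩ := hFS S₁ S₂ φ hbij hfwd hbwd
  refine ⟨μ, hμ2, fun i hi => ?_⟩
  have hmem : π i ∈ S₁ := (hmem₁ (π i)).2 (by simpa using hi)
  rw [hμ1 (π i) hmem]
  simp [hφdef]

end Aux2
section Aux3

variable {P : Type} [Fintype P] [DecidableEq P]

lemma hist_trans_subset (Γ : AccessStructure P) {n : ℕ} (π : Fin n ≃ P)
    (μ : Equiv.Perm P) (hμ : ∀ E : Finset P, E ∈ Γ.edges ↔ E.image μ ∈ Γ.edges)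
    (j : Fin n) : hist Γ (π.trans μ) j ⊆ hist Γ π j := by
  intro x hx
  unfold hist at hx ⊢
  rcases Finset.mem_image.1 hx with ⟨E', hE'f, hE'enc⟩
  obtain ⟨hE'e, hE'j, hE'all⟩ := Finset.mem_filter.1 hE'f
  refine Finset.mem_image.2 ⟨E'.image μ.symm, Finset.mem_filter.2 ⟨?_, ?_, ?_⟩, ?_⟩
  · have himg : (E'.image ⇑μ.symm).image ⇑μ = E' := by
      rw [Finset.image_image]
      have : (⇑μ ∘ ⇑μ.symm) = id := by funext a; simp
      rw [this, Finset.image_id]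
    rw [hμ, himg]; exact hE'e
  · have h1 : (π.trans μ) j ∈ E' := hE'j
    have h2 : μ.symm ((π.trans μ) j) ∈ E'.image ⇑μ.symm := Finset.mem_image_of_mem _ h1
    simpa using h2
  · intro p hp
    rcases Finset.mem_image.1 hp with ⟨q, hq, rfl⟩
    obtain ⟨i, hi, hqi⟩ := hE'all q hq
    refine ⟨i, hi, ?_⟩
    rw [← hqi]; simp [Equiv.trans]
  · rw [← hE'enc, Finset.image_image]
    rfl

lemma hist_trans (Γ : AccessStructure P) {n : ℕ} (π : Fin n ≃ P)
    (μ : Equiv.Perm P) (hμ : ∀ E : Finset P, E ∈ Γ.edges ↔ E.image μ ∈ Γ.edges)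
    (j : Fin n) : hist Γ (π.trans μ) j = hist Γ π j := by
  apply Finset.Subset.antisymm (hist_trans_subset Γ π μ hμ j)
  have hμ' : ∀ E : Finset P, E ∈ Γ.edges ↔ E.image μ.symm ∈ Γ.edges := by
    intro E
    have himg : (E.image ⇑μ.symm).image ⇑μ = E := by
      rw [Finset.image_image]
      have : (⇑μ ∘ ⇑μ.symm) = id := by funext a; simp
      rw [this, Finset.image_id]
    rw [hμ (E.image ⇑μ.symm), himg]
  have h2 := hist_trans_subset Γ (π.trans μ) μ.symm hμ' j
  have heq : (π.trans μ).trans μ.symm = π := by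
    apply Equiv.ext; intro i; simp
  rwa [heq] at h2

lemma histList_trans (Γ : AccessStructure P) {n : ℕ} (π : Fin n ≃ P)
    (μ : Equiv.Perm P) (hμ : ∀ E : Finset P, E ∈ Γ.edges ↔ E.image μ ∈ Γ.edges)
    (j : Fin n) : histList Γ (π.trans μ) j = histList Γ π j := by
  unfold histList
  exact List.map_congr_left (fun i _ => hist_trans Γ π μ hμ i)

open Classical in
/-- The dealer's choice: an arrival order compatible with the history `L` and
with the choices the dealer made on proper prefixes of `L` (recorded by `c`). -/
noncomputable def pick (Γ : AccessStructure P) (L : List (Finset (Finset ℕ)))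
    (c : List (Finset (Finset ℕ)) → Fin (Fintype.card P) ≃ P) :
    Fin (Fintype.card P) ≃ P :=
  if h : ∃ π : Fin (Fintype.card P) ≃ P,
      (∃ j : Fin (Fintype.card P), histList Γ π j = L) ∧
      ∀ i : Fin (Fintype.card P), i.1 + 1 < L.length → π i = c (L.take (i.1 + 1)) i
  then h.choose else (Fintype.equivFin P).symm

lemma choose_dite_congr {α : Sort*} {b1 b2 : α → Prop} (hb : b1 = b2) (d : α)
    [i1 : Decidable (∃ x, b1 x)] [i2 : Decidable (∃ x, b2 x)] :
    (dite (∃ x, b1 x) (fun h => h.choose) fun _ => d) =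
      (dite (∃ x, b2 x) (fun h => h.choose) fun _ => d) := by
  subst hb
  rw [Subsingleton.elim i1 i2]

lemma pick_congr (Γ : AccessStructure P) (L : List (Finset (Finset ℕ)))
    (c c' : List (Finset (Finset ℕ)) → Fin (Fintype.card P) ≃ P)
    (hcc : ∀ i : Fin (Fintype.card P), i.1 + 1 < L.length →
      c (L.take (i.1 + 1)) = c' (L.take (i.1 + 1))) :
    pick Γ L c = pick Γ L c' := by
  unfold pick
  apply choose_dite_congr
  funext π
  apply propext
  constructor
  · rintro ⟨h1, h2⟩
    exact ⟨h1, fun i hi => by rw [h2 i hi, hcc i hi]⟩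
  · rintro ⟨h1, h2⟩
    exact ⟨h1, fun i hi => by rw [h2 i hi, ← hcc i hi]⟩

lemma pick_pos (Γ : AccessStructure P) (L : List (Finset (Finset ℕ)))
    (c : List (Finset (Finset ℕ)) → Fin (Fintype.card P) ≃ P)
    (h : ∃ π : Fin (Fintype.card P) ≃ P,
      (∃ j : Fin (Fintype.card P), histList Γ π j = L) ∧
      ∀ i : Fin (Fintype.card P), i.1 + 1 < L.length → π i = c (L.take (i.1 + 1)) i) :
    (∃ j : Fin (Fintype.card P), histList Γ (pick Γ L c) j = L) ∧
      ∀ i : Fin (Fintype.card P), i.1 + 1 < L.length →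
        (pick Γ L c) i = c (L.take (i.1 + 1)) i := by
  unfold pick
  rw [dif_pos h]
  exact h.choose_spec

/-- `pick` iterated with fuel. -/
noncomputable def canonChoiceN (Γ : AccessStructure P) :
    ℕ → List (Finset (Finset ℕ)) → (Fin (Fintype.card P) ≃ P)
  | 0 => fun L => pick Γ L (fun _ => (Fintype.equivFin P).symm)
  | (k + 1) => fun L => pick Γ L (canonChoiceN Γ k)

/-- The dealer's choice of a representative arrival order for the history `L`. -/
noncomputable def canonChoice (Γ : AccessStructure P) (L : List (Finset (Finset ℕ))) :
    Fin (Fintype.card P) ≃ P :=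
  canonChoiceN Γ L.length L

lemma canonChoiceN_stable (Γ : AccessStructure P) :
    ∀ (m : ℕ) (L : List (Finset (Finset ℕ))), L.length ≤ m →
      ∀ k : ℕ, L.length ≤ k → canonChoiceN Γ k L = canonChoice Γ L := by
  intro m
  induction m with
  | zero =>
    intro L hL k _
    have hnil : L = [] := List.eq_nil_of_length_eq_zero (Nat.le_zero.mp hL)
    subst hnil
    cases k with
    | zero => rfl
    | succ k =>
      show canonChoiceN Γ (k + 1) [] = canonChoiceN Γ 0 []
      simp only [canonChoiceN]
      apply pick_congr
      intro i hi
      simp at hi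
  | succ m IH =>
    intro L hL k hk
    rcases Nat.lt_or_ge L.length (m + 1) with hlt | hge
    · exact IH L (by omega) k hk
    · have hLm : L.length = m + 1 := le_antisymm hL hge
      obtain ⟨k', rfl⟩ : ∃ k', k = k' + 1 := ⟨k - 1, by omega⟩
      show canonChoiceN Γ (k' + 1) L = canonChoice Γ L
      simp only [canonChoiceN]
      have h2 : canonChoice Γ L = pick Γ L (canonChoiceN Γ m) := by
        unfold canonChoice
        rw [hLm]
        simp only [canonChoiceN]
      rw [h2]
      apply pick_congr
      intro i hi
      have hlen : (L.take (i.1 + 1)).length = i.1 + 1 := by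
        simp [List.length_take]; omega
      rw [IH (L.take (i.1 + 1)) (by omega) k' (by omega),
        IH (L.take (i.1 + 1)) (by omega) m (by omega)]

lemma canonChoice_unfold (Γ : AccessStructure P) (L : List (Finset (Finset ℕ)))
    (h : 0 < L.length) : canonChoice Γ L = pick Γ L (canonChoice Γ) := by
  obtain ⟨m, hm⟩ : ∃ m, L.length = m + 1 := ⟨L.length - 1, by omega⟩
  have h1 : canonChoice Γ L = pick Γ L (canonChoiceN Γ m) := by
    unfold canonChoice
    rw [hm]
    simp only [canonChoiceN]
  rw [h1]
  apply pick_congr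
  intro i hi
  have hlen : (L.take (i.1 + 1)).length = i.1 + 1 := by
    simp [List.length_take]; omega
  exact canonChoiceN_stable Γ m (L.take (i.1 + 1)) (by omega) m (by omega)

end Aux3
section Aux4

variable {P : Type} [Fintype P] [DecidableEq P]

lemma canonChoice_spec (Γ : AccessStructure P) (hFS : FullySymmetric Γ) :
    ∀ (k : ℕ) (j : Fin (Fintype.card P)) (π : Fin (Fintype.card P) ≃ P), j.1 = k →
      histList Γ (canonChoice Γ (histList Γ π j)) j = histList Γ π j ∧
      ∀ i : Fin (Fintype.card P), i ≤ j →
        canonChoice Γ (histList Γ π j) i = canonChoice Γ (histList Γ π i) i := by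
  intro k
  induction k using Nat.strong_induction_on with
  | _ k SIH =>
  intro j π hjk
  have hlen : (histList Γ π j).length = j.1 + 1 := histList_length Γ π j
  -- the existence condition for `pick` at `L := histList Γ π j`
  have hcond : ∃ π' : Fin (Fintype.card P) ≃ P,
      (∃ j₀ : Fin (Fintype.card P), histList Γ π' j₀ = histList Γ π j) ∧
      ∀ i : Fin (Fintype.card P), i.1 + 1 < (histList Γ π j).length →
        π' i = canonChoice Γ ((histList Γ π j).take (i.1 + 1)) i := by
    rcases Nat.eq_zero_or_pos j.1 with hj0 | hjpos
    · refine ⟨π, ⟨j, rfl⟩, fun i hi => absurd hi (by rw [hlen]; omega)⟩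
    · set j' : Fin (Fintype.card P) := ⟨j.1 - 1, by omega⟩ with hj'
      have hj'j : j' ≤ j := by rw [Fin.le_def]; show j.1 - 1 ≤ j.1; omega
      obtain ⟨hπ₀L, hπ₀pre⟩ := SIH j'.1 (by show j.1 - 1 < k; omega) j' π rfl
      set π₀ := canonChoice Γ (histList Γ π j') with hπ₀
      obtain ⟨μ, hμiff, hμeq⟩ := exists_auto Γ hFS π π₀ j'
        (fun i hi => hist_of_histList_eq Γ π₀ π hπ₀L (hi) |>.symm)
      refine ⟨π.trans μ, ⟨j, histList_trans Γ π μ hμiff j⟩, ?_⟩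
      intro i hi
      rw [hlen] at hi
      have hij' : i ≤ j' := by rw [Fin.le_def]; show i.1 ≤ j.1 - 1; omega
      have h1 : (π.trans μ) i = μ (π i) := rfl
      rw [h1, hμeq i hij', hπ₀pre i hij',
        histList_take Γ π (le_trans hij' hj'j)]
  have hunf : canonChoice Γ (histList Γ π j) = pick Γ (histList Γ π j) (canonChoice Γ) :=
    canonChoice_unfold Γ _ (by rw [hlen]; omega)
  obtain ⟨⟨j₀, hj₀⟩, hpre⟩ := pick_pos Γ (histList Γ π j) (canonChoice Γ) hcond
  have hj₀j : j₀ = j := by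
    have h1 := histList_length Γ (pick Γ (histList Γ π j) (canonChoice Γ)) j₀
    rw [hj₀, hlen] at h1
    exact Fin.ext (by omega)
  subst hj₀j
  constructor
  · rw [hunf]; exact hj₀
  · intro i hi
    rcases lt_or_eq_of_le hi with hlt | heq
    · rw [hunf, hpre i (by rw [hlen]; exact Nat.succ_lt_succ hlt),
        histList_take Γ π hi]
    · rw [heq]

/-- The dealer's strategy: the participant assigned to the history `L`. -/
noncomputable def canonP (Γ : AccessStructure P) (L : List (Finset (Finset ℕ))) : P :=
  haveI : Nonempty P := ⟨(Γ.mem_nonempty _ Γ.nonempty.choose_spec).choose⟩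
  canonChoice Γ L ⟨(L.length - 1) % Fintype.card P, Nat.mod_lt _ Fintype.card_pos⟩

lemma canonP_eq (Γ : AccessStructure P) (π : Fin (Fintype.card P) ≃ P)
    (j : Fin (Fintype.card P)) :
    canonP Γ (histList Γ π j) = canonChoice Γ (histList Γ π j) j := by
  unfold canonP
  congr 1
  apply Fin.ext
  simp only [histList_length]
  simpa using Nat.mod_eq_of_lt j.2

/-- Main combinatorial lemma: the dealer's assignment always agrees with an
automorphism of `Γ`. -/
lemma exists_auto_canon (Γ : AccessStructure P) (hFS : FullySymmetric Γ)
    (π : Fin (Fintype.card P) ≃ P) :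
    ∃ μ : Equiv.Perm P, (∀ E : Finset P, E ∈ Γ.edges ↔ E.image μ ∈ Γ.edges) ∧
      ∀ p : P, canonP Γ (histList Γ π (π.symm p)) = μ p := by
  haveI : Nonempty P := ⟨(Γ.mem_nonempty _ Γ.nonempty.choose_spec).choose⟩
  have hpos : 0 < Fintype.card P := Fintype.card_pos
  set jmax : Fin (Fintype.card P) := ⟨Fintype.card P - 1, by omega⟩ with hjm
  obtain ⟨hL, hpre⟩ := canonChoice_spec Γ hFS jmax.1 jmax π rfl
  set π₀ := canonChoice Γ (histList Γ π jmax) with hπ₀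
  obtain ⟨μ, hμiff, hμeq⟩ := exists_auto Γ hFS π π₀ jmax
    (fun i hi => (hist_of_histList_eq Γ π₀ π hL hi).symm)
  refine ⟨μ, hμiff, fun p => ?_⟩
  have hall : π.symm p ≤ jmax := by
    simp only [Fin.le_def, hjm]
    have := (π.symm p).2
    omega
  rw [canonP_eq Γ π (π.symm p), ← hpre (π.symm p) hall,
    ← hμeq (π.symm p) hall]
  simp

end Aux4
section Aux5

variable {P : Type} [Fintype P] [DecidableEq P]

/-- Relabelling the shares of a scheme along a map of participants. -/
noncomputable def Scheme.comp (𝒮 : Scheme P) (φ : P → P) : Scheme P where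
  Ω := 𝒮.Ω
  ms := 𝒮.ms
  μ := 𝒮.μ
  isProb := 𝒮.isProb
  Sec := 𝒮.Sec
  secFin := 𝒮.secFin
  sec := 𝒮.sec
  Sh := fun p => 𝒮.Sh (φ p)
  shFin := fun p => 𝒮.shFin (φ p)
  sh := fun p => 𝒮.sh (φ p)

lemma realizes_comp (Γ : AccessStructure P) (𝒮 : Scheme P) (h𝒮 : 𝒮.Realizes Γ)
    (φ : P → P) (μ : Equiv.Perm P) (hφ : ∀ p, φ p = μ p)
    (hμ : ∀ E : Finset P, E ∈ Γ.edges ↔ E.image μ ∈ Γ.edges) :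
    (𝒮.comp φ).Realizes Γ := by
  obtain ⟨hpos, hqual, hindep⟩ := h𝒮
  -- the reindexing equivalence for each set `A`
  have main : ∀ A : Finset P,
      ∃ g : ((p : {x // x ∈ A}) → 𝒮.Sh (φ p.1)) ≃ ((q : {x // x ∈ A.image μ}) → 𝒮.Sh q.1),
        ∀ ω, g (joint (𝒮.comp φ).sh A ω) = joint 𝒮.sh (A.image μ) ω := by
    intro A
    have hmemB : ∀ p : P, p ∈ A → φ p ∈ A.image μ := fun p hp => by
      rw [hφ]; exact Finset.mem_image_of_mem _ hp
    set e : {x // x ∈ A} ≃ {x // x ∈ A.image μ} :=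
      { toFun := fun p => ⟨φ p.1, hmemB p.1 p.2⟩
        invFun := fun q => ⟨μ.symm q.1, by
          rcases Finset.mem_image.1 q.2 with ⟨a, ha, hq⟩
          rw [← hq]; simpa using ha⟩
        left_inv := fun p => Subtype.ext (by simp [hφ])
        right_inv := fun q => Subtype.ext (by simp [hφ]) } with he
    refine ⟨Equiv.piCongrLeft (fun q : {x // x ∈ A.image μ} => 𝒮.Sh q.1) e, ?_⟩
    intro ω
    funext q
    rw [← e.apply_symm_apply q]
    exact (Equiv.piCongrLeft_apply_apply (fun q : {x // x ∈ A.image μ} => 𝒮.Sh q.1) e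
      (joint (𝒮.comp φ).sh A ω) (e.symm q)).trans rfl
  refine ⟨hpos, ?_, ?_⟩
  · intro A hA
    obtain ⟨g, hkey⟩ := main A
    have hB : Γ.Qualified (A.image μ) := by
      obtain ⟨E, hE, hEA⟩ := hA
      exact ⟨E.image μ, (hμ E).1 hE, Finset.image_subset_image hEA⟩
    obtain ⟨f, hf⟩ := hqual (A.image μ) hB
    refine ⟨f ∘ g, ?_⟩
    filter_upwards [hf] with ω hω
    exact hω.trans (congrArg f (hkey ω).symm)
  · intro A hA
    obtain ⟨g, hkey⟩ := main A
    have hB : ¬ Γ.Qualified (A.image μ) := by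
      rintro ⟨F, hF, hFA⟩
      apply hA
      have himg : (F.image ⇑μ.symm).image ⇑μ = F := by
        rw [Finset.image_image]
        have : (⇑μ ∘ ⇑μ.symm) = id := by funext a; simp
        rw [this, Finset.image_id]
      refine ⟨F.image ⇑μ.symm, ?_, ?_⟩
      · rw [hμ (F.image ⇑μ.symm), himg]; exact hF
      · intro a ha
        rcases Finset.mem_image.1 ha with ⟨b, hb, rfl⟩
        rcases Finset.mem_image.1 (hFA hb) with ⟨c, hc, rfl⟩
        simpa using hc
    have hind := hindep (A.image μ) hB
    intro v t
    have hpre : (joint (𝒮.comp φ).sh A) ⁻¹' {v} = (joint 𝒮.sh (A.image μ)) ⁻¹' {g v} := by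
      ext ω
      simp only [Set.mem_preimage, Set.mem_singleton_iff]
      constructor
      · intro hv; exact (hkey ω).symm.trans (congrArg g hv)
      · intro hv; apply g.injective; rw [hkey ω, hv]
    rw [hpre]
    exact hind (g v) t

end Aux5
/-- Claim 4.1. For a fully symmetric access structure the
on-line and off-line complexities coincide. -/
theorem statement10 {P : Type} [Fintype P] [DecidableEq P]
    (Γ : AccessStructure P) (h : FullySymmetric Γ) :
    oC Γ = sigmaC Γ := by
  apply le_antisymm
  · -- `oC Γ ≤ sigmaC Γ`: turn any scheme into an on-line scheme via the dealer `canonP`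
    apply le_iInf; intro 𝒮; apply le_iInf; intro h𝒮
    set 𝒪 : OnlineScheme P :=
      { Ω := 𝒮.Ω
        ms := 𝒮.ms
        μ := 𝒮.μ
        isProb := 𝒮.isProb
        Sec := 𝒮.Sec
        secFin := 𝒮.secFin
        sec := 𝒮.sec
        Idx := P
        ShT := 𝒮.Sh
        shFin := 𝒮.shFin
        ξ := 𝒮.sh
        D := canonP Γ } with h𝒪
    have hreal : 𝒪.Realizes Γ := by
      intro π
      obtain ⟨μ, hμiff, hμeq⟩ := exists_auto_canon Γ h π
      exact realizes_comp Γ 𝒮 h𝒮 (fun p => canonP Γ (histList Γ π (π.symm p))) μ hμeq hμiff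
    have hle : oC Γ ≤ 𝒪.complexity := iInf₂_le 𝒪 hreal
    have heq : 𝒪.complexity = 𝒮.complexity := rfl
    rw [heq] at hle
    exact hle
  · -- `sigmaC Γ ≤ oC Γ`: any on-line scheme induces a scheme for a fixed order
    apply le_iInf; intro 𝒪; apply le_iInf; intro h𝒪
    set π : Fin (Fintype.card P) ≃ P := (Fintype.equivFin P).symm with hπ
    have hreal := h𝒪 π
    have h1 : sigmaC Γ ≤ (𝒪.toScheme Γ π).complexity := iInf₂_le (𝒪.toScheme Γ π) hreal
    refine h1.trans ?_
    show (⨆ p : P, ENNReal.ofReal (H (𝒪.toScheme Γ π).μ ((𝒪.toScheme Γ π).sh p))) /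
        ENNReal.ofReal (H (𝒪.toScheme Γ π).μ (𝒪.toScheme Γ π).sec) ≤ 𝒪.complexity
    apply ENNReal.div_le_div_right
    apply iSup_le
    intro p
    exact le_iSup (fun α => ENNReal.ofReal (H 𝒪.μ (𝒪.ξ α)))
      (𝒪.D (histList Γ π (π.symm p)))

end

end OnlineSecretSharing
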